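/- Let {f_k} = {U⁻¹CMe_k} be a (U, C)-controlled Riesz basis for H. Then {f_k} is a Bessel sequence, and the sequence g_k = U*(C⁻¹)*(M⁻¹)*e_k satisfies f = Σ_k ⟨f, g_k⟩ f_k = Σ_k ⟨f, f_k⟩ g_k for all f ∈ H; moreover {g_k} is the unique sequence with this property, and it is a ((U*)⁻¹, (C*)⁻¹)-controlled Riesz basis. -/

import Mathlib

open scoped ComplexInnerProductSpace
open ContinuousLinearMap

theorem stmt_15 {H : Type*} [NormedAddCommGroup H] [InnerProductSpace ℂ H]
    [CompleteSpace H]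
    (U Ui C Ci Mi : H →L[ℂ] H)
    (hUUi : U ∘L Ui = 1) (hUiU : Ui ∘L U = 1)
    (hCCi : C ∘L Ci = 1) (hCiC : Ci ∘L C = 1)
    (e : HilbertBasis ℕ ℂ H) (M : H →L[ℂ] H) (hM : Function.Bijective M)
    (hMMi : M ∘L Mi = 1) (hMiM : Mi ∘L M = 1)
    (F : ℕ → H) (hF : ∀ k, F k = Ui (C (M (e k))))
    (g : ℕ → H)
    (hg : ∀ k, g k = ContinuousLinearMap.adjoint U
      (ContinuousLinearMap.adjoint Ci (ContinuousLinearMap.adjoint Mi (e k)))) :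
    (∃ B : ℝ, 0 < B ∧ ∀ f : H,
      Summable (fun k => ‖⟪F k, f⟫‖ ^ 2) ∧
      ∑' k, ‖⟪F k, f⟫‖ ^ 2 ≤ B * ‖f‖ ^ 2) ∧
    (∀ f : H, HasSum (fun k => ⟪g k, f⟫ • F k) f ∧
      HasSum (fun k => ⟪F k, f⟫ • g k) f) ∧
    (∀ g' : ℕ → H, (∀ f : H, HasSum (fun k => ⟪g' k, f⟫ • F k) f ∧
      HasSum (fun k => ⟪F k, f⟫ • g' k) f) → g' = g) ∧
    (∃ N : H →L[ℂ] H, Function.Bijective N ∧ ∀ k,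
      g k = ContinuousLinearMap.adjoint U
        (ContinuousLinearMap.adjoint Ci (N (e k)))) := by
  classical
  set T : H →L[ℂ] H := Ui ∘L C ∘L M with hT
  set Ti : H →L[ℂ] H := Mi ∘L Ci ∘L U with hTi
  have hUUi' : ∀ x, U (Ui x) = x := fun x => by
    simpa using ContinuousLinearMap.ext_iff.mp hUUi x
  have hUiU' : ∀ x, Ui (U x) = x := fun x => by
    simpa using ContinuousLinearMap.ext_iff.mp hUiU x
  have hCCi' : ∀ x, C (Ci x) = x := fun x => by
    simpa using ContinuousLinearMap.ext_iff.mp hCCi x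
  have hCiC' : ∀ x, Ci (C x) = x := fun x => by
    simpa using ContinuousLinearMap.ext_iff.mp hCiC x
  have hMMi' : ∀ x, M (Mi x) = x := fun x => by
    simpa using ContinuousLinearMap.ext_iff.mp hMMi x
  have hMiM' : ∀ x, Mi (M x) = x := fun x => by
    simpa using ContinuousLinearMap.ext_iff.mp hMiM x
  have hTTi' : ∀ x, T (Ti x) = x := fun x => by
    simp [hT, hTi, hMMi', hCCi', hUiU']
  have hTiT' : ∀ x, Ti (T x) = x := fun x => by
    simp [hT, hTi, hUUi', hCiC', hMiM']
  have hTTi : T ∘L Ti = 1 := ContinuousLinearMap.ext fun x => by simpa using hTTi' x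
  have hTiT : Ti ∘L T = 1 := ContinuousLinearMap.ext fun x => by simpa using hTiT' x
  have hFT : ∀ k, F k = T (e k) := fun k => by simp [hF, hT]
  have hgT : ∀ k, g k = ContinuousLinearMap.adjoint Ti (e k) := fun k => by
    simp [hg, hTi, ContinuousLinearMap.adjoint_comp]
  -- inner product identities
  have hinnF : ∀ k f, ⟪F k, f⟫ = ⟪e k, (ContinuousLinearMap.adjoint T) f⟫ := fun k f => by
    rw [hFT, ContinuousLinearMap.adjoint_inner_right]
  have hinng : ∀ k f, ⟪g k, f⟫ = ⟪e k, Ti f⟫ := fun k f => by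
    rw [hgT, ContinuousLinearMap.adjoint_inner_left]
  have horth := orthonormal_iff_ite.mp e.orthonormal
  refine ⟨⟨‖ContinuousLinearMap.adjoint T‖ ^ 2 + 1, by positivity, fun f => ?_⟩, ?_, ?_, ?_⟩
  · constructor
    · simp only [hinnF]
      exact e.orthonormal.inner_products_summable _
    · calc ∑' k, ‖⟪F k, f⟫‖ ^ 2
          = ∑' k, ‖⟪e k, (ContinuousLinearMap.adjoint T) f⟫‖ ^ 2 := by simp only [hinnF]
        _ ≤ ‖(ContinuousLinearMap.adjoint T) f‖ ^ 2 := e.orthonormal.tsum_inner_products_le _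
        _ ≤ (‖ContinuousLinearMap.adjoint T‖ * ‖f‖) ^ 2 := by
            apply pow_le_pow_left₀ (norm_nonneg _)
            exact (ContinuousLinearMap.adjoint T).le_opNorm f
        _ ≤ (‖ContinuousLinearMap.adjoint T‖ ^ 2 + 1) * ‖f‖ ^ 2 := by
            rw [mul_pow]; nlinarith [sq_nonneg ‖f‖]
  · intro f
    constructor
    · have h1 : HasSum (fun k => ⟪e k, Ti f⟫ • e k) (Ti f) := by
        simpa [e.repr_apply_apply] using e.hasSum_repr (Ti f)
      have h2 := h1.mapL T
      simp only [map_smul] at h2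
      rw [hTTi'] at h2
      convert h2 using 2 with k
      rw [hinng, hFT]
    · have h1 : HasSum (fun k => ⟪e k, (ContinuousLinearMap.adjoint T) f⟫ • e k)
          ((ContinuousLinearMap.adjoint T) f) := by
        simpa [e.repr_apply_apply] using e.hasSum_repr ((ContinuousLinearMap.adjoint T) f)
      have h2 := h1.mapL (ContinuousLinearMap.adjoint Ti)
      simp only [map_smul] at h2
      have h3 : (ContinuousLinearMap.adjoint Ti) ((ContinuousLinearMap.adjoint T) f) = f := by
        have h : ContinuousLinearMap.adjoint Ti ∘L ContinuousLinearMap.adjoint T = 1 := by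
          rw [← ContinuousLinearMap.adjoint_comp, hTTi]
          exact ContinuousLinearMap.adjoint_id
        simpa using ContinuousLinearMap.ext_iff.mp h f
      rw [h3] at h2
      convert h2 using 2 with k
      rw [hinnF, hgT]
  · intro g' hg'
    funext k
    refine ext_inner_right ℂ fun f => ?_
    have h1 := (hg' f).1
    have h2 := h1.mapL Ti
    simp only [map_smul] at h2
    have h2' : HasSum (fun j => ⟪g' j, f⟫ • (e j : H)) (Ti f) := by
      convert h2 using 2 with j
      rw [hFT, hTiT']
    have h3 := h2'.mapL (innerSL ℂ (e k))
    simp only [innerSL_apply_apply, inner_smul_right] at h3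
    have h4 : HasSum (fun j => if j = k then ⟪g' k, f⟫ else 0) ⟪e k, Ti f⟫ := by
      convert h3 using 2 with j
      · rfl
      rw [horth k j]
      by_cases hjk : j = k
      · subst hjk; rw [if_pos rfl, if_pos rfl, mul_one]
      · rw [if_neg hjk, if_neg (Ne.symm hjk), mul_zero]
    have h5 : ⟪g' k, f⟫ = ⟪e k, Ti f⟫ := (hasSum_ite_eq k ⟪g' k, f⟫).unique h4
    rw [h5, ← hinng]
  · refine ⟨ContinuousLinearMap.adjoint Mi, ?_, fun k => hg k⟩
    have hA : ContinuousLinearMap.adjoint M ∘L ContinuousLinearMap.adjoint Mi = 1 := by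
      rw [← ContinuousLinearMap.adjoint_comp, hMiM]; exact ContinuousLinearMap.adjoint_id
    have hB : ContinuousLinearMap.adjoint Mi ∘L ContinuousLinearMap.adjoint M = 1 := by
      rw [← ContinuousLinearMap.adjoint_comp, hMMi]; exact ContinuousLinearMap.adjoint_id
    constructor
    · intro x y hxy
      have hx := ContinuousLinearMap.ext_iff.mp hA x
      have hy := ContinuousLinearMap.ext_iff.mp hA y
      simp only [ContinuousLinearMap.comp_apply, ContinuousLinearMap.one_apply] at hx hy
      rw [← hx, ← hy, hxy]
    · intro y
      exact ⟨ContinuousLinearMap.adjoint M y, by simpa using ContinuousLinearMap.ext_iff.mp hB y⟩
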